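/- Fix an integer m ≥ 3 and let X ∼ Poisson(m). Define α_i := P(X ≤ m−i) − P(X ≥ m+i) for i ∈ {1,...,m}. Then the sequence {α_i} changes sign at most once: there exists ℓ ∈ {1,...,m} such that α_i ≥ 0 for i ≤ ℓ and α_i ≤ 0 for i > ℓ. -/

import Mathlib

open ProbabilityTheory MeasureTheory Real
open scoped NNReal

noncomputable def Fp (r : ℝ≥0) (K : ℕ) : ℝ := ∑ k ∈ Finset.range (K+1), poissonPMFReal r k


-- Q n: m^n * (n + m) ≤ (m+1)^n * m
lemma L0aux (m : ℕ) (hm : 1 ≤ m) : ∀ n : ℕ, m^n * (n + m) ≤ (m+1)^n * m := by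
  intro n
  induction n with
  | zero => simp
  | succ n ih =>
    have h1 : m^n ≤ (m+1)^n := Nat.pow_le_pow_left (by omega) n
    calc m^(n+1) * (n+1+m) = m * (m^n * (n + m) + m^n) := by ring
      _ ≤ m * ((m+1)^n * m + (m+1)^n) := by
          exact Nat.mul_le_mul_left m (Nat.add_le_add ih h1)
      _ = (m+1)^(n+1) * m := by ring

lemma L0 (m : ℕ) (hm : 1 ≤ m) : 2 * m^m ≤ (m+1)^m := by
  have := L0aux m hm m
  nlinarith [Nat.pow_pos (n := m) (show 0 < m by omega), pow_pos (show 0 < m by omega) m]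

lemma nat2m (m : ℕ) (hm : 3 ≤ m) : (2*m).factorial ≤ m^(2*m) := by
  induction m with
  | zero => omega
  | succ m ih =>
    rcases Nat.lt_or_ge m 3 with h3 | h3
    · interval_cases m
      · omega
      · omega
      · norm_num [Nat.factorial]
    · have ih' := ih h3
      have hL : 4 * m^(2*m) ≤ (m+1)^(2*m) := by
        have h0 := L0 m (by omega)
        calc 4 * m^(2*m) = (2*m^m) * (2*m^m) := by rw [two_mul, pow_add]; ring
          _ ≤ (m+1)^m * (m+1)^m := Nat.mul_le_mul h0 h0
          _ = (m+1)^(2*m) := by rw [two_mul, pow_add]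
      have key : (2*(m+1)).factorial = (2*m+2)*((2*m+1)*(2*m).factorial) := by
        have : 2*(m+1) = (2*m+1)+1 := by ring
        rw [this, Nat.factorial_succ, Nat.factorial_succ]
      rw [key]
      have h1 : (2*m+2)*((2*m+1)*(2*m).factorial) ≤ (2*m+2)*((2*m+1)*m^(2*m)) :=
        Nat.mul_le_mul_left _ (Nat.mul_le_mul_left _ ih')
      have h2 : (2*m+2)*((2*m+1)*m^(2*m)) ≤ (m+1)^2 * (4 * m^(2*m)) := by nlinarith
      have h3' : (m+1)^2 * (4*m^(2*m)) ≤ (m+1)^2 * (m+1)^(2*m) := Nat.mul_le_mul_left _ hL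
      have h4 : (m+1)^2 * (m+1)^(2*m) = (m+1)^(2*(m+1)) := by rw [← pow_add]; ring_nf
      omega

-- small j regime: m^(2j) (m-j)! ≤ (m+j)!
lemma natSmall (m : ℕ) : ∀ j : ℕ, j*(j+1) ≤ m → m^(2*j) * (m-j).factorial ≤ (m+j).factorial := by
  intro j
  induction j with
  | zero => simp
  | succ j ih =>
    intro hj
    have hj' : j*(j+1) ≤ m := by nlinarith
    have ihh := ih hj'
    have hjm : j + 1 ≤ m := by nlinarith
    obtain ⟨k, hk⟩ : ∃ k, m = j + 1 + k := ⟨m - (j+1), by omega⟩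
    have hmj : m - j = k + 1 := by omega
    have hmj1 : m - (j+1) = k := by omega
    have hsq : m*m ≤ (m+j+1)*(m-j) := by rw [hmj]; nlinarith
    have e1 : (m+(j+1)).factorial = (m+j+1) * (m+j).factorial := by
      have : m+(j+1) = (m+j)+1 := by ring
      rw [this, Nat.factorial_succ]
    rw [e1]
    calc m^(2*(j+1)) * (m-(j+1)).factorial = (m*m) * (m^(2*j) * k.factorial) := by
          rw [hmj1]; ring
      _ ≤ ((m+j+1)*(m-j)) * (m^(2*j) * k.factorial) := Nat.mul_le_mul_right _ hsq
      _ = (m+j+1) * (m^(2*j) * ((m-j).factorial)) := by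
          rw [hmj, Nat.factorial_succ]; ring
      _ ≤ (m+j+1) * (m+j).factorial := Nat.mul_le_mul_left _ ihh

-- propagation of failure
lemma natK1 (m j : ℕ) (hj : 1 ≤ j) (hjm : j < m)
    (h : (m+j).factorial < m^(2*j) * (m-j).factorial) :
    (m+(j+1)).factorial < m^(2*(j+1)) * (m-(j+1)).factorial := by
  rcases Nat.lt_or_ge m (j*(j+1)) with hc | hc
  swap
  · exact absurd (natSmall m j hc) (by omega)
  · obtain ⟨k, hk⟩ : ∃ k, m = j + 1 + k := ⟨m - (j+1), by omega⟩
    have hmj : m - j = k + 1 := by omega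
    have hmj1 : m - (j+1) = k := by omega
    have hsq : (m+j+1)*(m-j) ≤ m*m := by rw [hmj]; nlinarith
    have e1 : (m+(j+1)).factorial = (m+j+1) * (m+j).factorial := by
      have : m+(j+1) = (m+j)+1 := by ring
      rw [this, Nat.factorial_succ]
    rw [e1]
    have hfpos : 0 < (m-(j+1)).factorial := Nat.factorial_pos _
    calc (m+j+1) * (m+j).factorial < (m+j+1) * (m^(2*j) * (m-j).factorial) := by
          have : 0 < m+j+1 := by omega
          exact (Nat.mul_lt_mul_left this).mpr h
      _ = ((m+j+1)*(m-j)) * (m^(2*j) * k.factorial) := by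
          rw [hmj, Nat.factorial_succ]; ring
      _ ≤ (m*m) * (m^(2*j) * k.factorial) := Nat.mul_le_mul_right _ hsq
      _ = m^(2*(j+1)) * (m-(j+1)).factorial := by
          rw [hmj1]; ring




lemma pmf_lt_pmf (m : ℕ) (hm : 0 < m) (a b : ℕ) :
    poissonPMFReal m a < poissonPMFReal m b ↔ b.factorial * m ^ a < a.factorial * m ^ b := by
  rw [← Nat.cast_lt (α := ℝ)]
  unfold poissonPMFReal
  have hm' : (0:ℝ) < m := by exact_mod_cast hm
  have hc : ((m : ℝ≥0) : ℝ) = (m : ℝ) := by push_cast; ring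
  have ha : (0:ℝ) < a.factorial := by exact_mod_cast a.factorial_pos
  have hb : (0:ℝ) < b.factorial := by exact_mod_cast b.factorial_pos
  rw [hc, div_lt_div_iff₀ (by positivity) (by positivity)]
  push_cast
  constructor
  · intro h
    have he := Real.exp_pos (-(m:ℝ))
    nlinarith [mul_pos (pow_pos hm' a) hb, mul_pos (pow_pos hm' b) ha]
  · intro h
    have he := Real.exp_pos (-(m:ℝ))
    nlinarith [mul_pos (pow_pos hm' a) hb, mul_pos (pow_pos hm' b) ha]

-- the half-difference function
noncomputable def dd (m : ℕ) (j : ℕ) : ℝ :=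
  (if j ≤ m then poissonPMFReal m (m - j) else 0) - poissonPMFReal m (m + j)

lemma dd_lt_iff (m j : ℕ) (hm : 0 < m) (hj : j ≤ m) :
    dd m j < 0 ↔ (m+j).factorial < m^(2*j) * (m-j).factorial := by
  rw [dd, if_pos hj, sub_neg, pmf_lt_pmf m hm]
  have he : m ^ (m + j) = m ^ (2*j) * m ^ (m - j) := by
    rw [← pow_add]; congr 1; omega
  rw [he]
  constructor
  · intro h
    have := Nat.lt_of_mul_lt_mul_right (a := m ^ (m-j))
      (by calc (m+j).factorial * m^(m-j) < (m-j).factorial * (m^(2*j) * m^(m-j)) := h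
            _ = (m^(2*j) * (m-j).factorial) * m^(m-j) := by ring)
    exact this
  · intro h
    calc (m+j).factorial * m^(m-j) < (m^(2*j) * (m-j).factorial) * m^(m-j) :=
          (Nat.mul_lt_mul_right (Nat.pow_pos hm)).mpr h
      _ = (m-j).factorial * (m^(2*j) * m^(m-j)) := by ring

lemma pPos (m : ℕ) (hm : 0 < m) (k : ℕ) : 0 < poissonPMFReal m k :=
  poissonPMFReal_pos (by exact_mod_cast hm)

lemma K1r (m : ℕ) (hm : 3 ≤ m) (j : ℕ) (hj : 1 ≤ j) (h : dd m j < 0) : dd m (j+1) < 0 := by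
  have hm0 : 0 < m := by omega
  rcases Nat.lt_or_ge m (j+1) with hgt | hle
  · -- j+1 > m : dd (j+1) = -p(m+j+1) < 0
    rw [dd, if_neg (by omega)]
    simp only [zero_sub, neg_neg, neg_lt, neg_zero]
    exact pPos m hm0 _
  · have hjm : j ≤ m := by omega
    rcases Nat.eq_or_lt_of_le hle with heq | hlt
    ·
      rw [dd_lt_iff m j hm0 hjm] at h
      rw [dd_lt_iff m (j+1) hm0 hle]
      exact natK1 m j hj (by omega) h
    · rw [dd_lt_iff m j hm0 hjm] at h
      rw [dd_lt_iff m (j+1) hm0 hle]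
      exact natK1 m j hj (by omega) h

lemma dd_zero (m : ℕ) : dd m 0 = 0 := by simp [dd]

lemma dd_one (m : ℕ) (hm : 3 ≤ m) : 0 ≤ dd m 1 := by
  by_contra hlt
  push_neg at hlt
  rw [dd_lt_iff m 1 (by omega) (by omega)] at hlt
  exact absurd (natSmall m 1 (by omega)) (by omega)

lemma dd_propagate (m : ℕ) (hm : 3 ≤ m) (i : ℕ) (hi : 1 ≤ i) (h : dd m i < 0) :
    ∀ j, i ≤ j → dd m j < 0 := by
  intro j hij
  induction j, hij using Nat.le_induction with
  | base => exact h
  | succ n hn ih => exact K1r m hm n (by omega) ih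




lemma M1 (r : ℝ≥0) (K : ℕ) : (poissonMeasure r {n : ℕ | n ≤ K}).toReal = Fp r K := by
  have hset : {n : ℕ | n ≤ K} = (↑(Finset.range (K+1)) : Set ℕ) := by
    ext n; simp [Nat.lt_succ_iff]
  rw [hset, ← MeasureTheory.sum_measure_singleton, Finset.sum_congr rfl (fun k _ => poissonMeasure_singleton r k)]
  rw [ENNReal.toReal_sum (by intro a _; exact ENNReal.ofReal_ne_top)]
  unfold Fp
  congr 1
  ext k
  show (ENNReal.ofReal (poissonPMFReal r k)).toReal = _
  rw [ENNReal.toReal_ofReal poissonPMFReal_nonneg]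

lemma M2 (r : ℝ≥0) (K : ℕ) : (poissonMeasure r {n : ℕ | K + 1 ≤ n}).toReal = 1 - Fp r K := by
  have hset : {n : ℕ | K + 1 ≤ n} = ({n : ℕ | n ≤ K})ᶜ := by
    ext n; simp only [Set.mem_setOf_eq, Set.mem_compl_iff, not_le]; omega
  rw [hset, measure_compl (by trivial) (measure_ne_top _ _), measure_univ]
  rw [ENNReal.toReal_sub_of_le (prob_le_one) (by simp), ENNReal.toReal_one, M1]





lemma summable_p (m : ℕ) : Summable (poissonPMFReal m) := (poissonPMFRealSum m).summable

lemma tsum_p (m : ℕ) : ∑' k, poissonPMFReal m k = 1 := (poissonPMFRealSum m).tsum_eq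

lemma p_step (m n : ℕ) : ((n:ℝ)+1) * poissonPMFReal m (n+1) = (m:ℝ) * poissonPMFReal m n := by
  unfold poissonPMFReal
  have hc : ((m : ℝ≥0) : ℝ) = (m : ℝ) := by push_cast; ring
  rw [hc, Nat.factorial_succ]
  have h1 : (n:ℝ)+1 ≠ 0 := by positivity
  have h2 : (n.factorial : ℝ) ≠ 0 := by
    have := n.factorial_pos
    positivity
  push_cast
  field_simp
  ring

lemma hasSum_mean (m : ℕ) : HasSum (fun k : ℕ => (k:ℝ) * poissonPMFReal m k) m := by
  have h : HasSum (fun n : ℕ => ((n:ℝ)+1) * poissonPMFReal m (n+1)) m := by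
    have := (poissonPMFRealSum m).mul_left (m:ℝ)
    rw [mul_one] at this
    convert this using 2 with n
    · rfl
    exact p_step m n
  have h2 := (hasSum_nat_add_iff (f := fun k : ℕ => (k:ℝ) * poissonPMFReal m k) 1).mp
    (by convert h using 2 with n; rfl; push_cast; ring)
  simpa using h2

lemma summable_mean (m : ℕ) : Summable (fun k : ℕ => (k:ℝ) * poissonPMFReal m k) :=
  (hasSum_mean m).summable

lemma summable_tail (m K : ℕ) : Summable (fun j : ℕ => poissonPMFReal m (j + K)) :=
  (summable_nat_add_iff K).mpr (summable_p m)

lemma summable_tail' (m K : ℕ) : Summable (fun j : ℕ => poissonPMFReal m (K + j)) := by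
  have := summable_tail m K
  simpa [add_comm] using this

lemma tail_eq (m K : ℕ) : ∑' j : ℕ, poissonPMFReal m (j + K)
    = 1 - ∑ i ∈ Finset.range K, poissonPMFReal m i := by
  have := Summable.sum_add_tsum_nat_add K (summable_p m)
  rw [tsum_p] at this
  linarith

lemma summable_a (m : ℕ) :
    Summable (fun j : ℕ => if j ≤ m then poissonPMFReal m (m - j) else 0) := by
  apply summable_of_ne_finset_zero (s := Finset.range (m+1))
  intro j hj
  simp at hj
  rw [if_neg (by omega)]

lemma summable_dd (m : ℕ) : Summable (dd m) := by
  unfold dd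
  exact (summable_a m).sub (summable_tail' m m)

lemma summable_jtail (m : ℕ) : Summable (fun j : ℕ => (j:ℝ) * poissonPMFReal m (m + j)) := by
  have h1 : Summable (fun j : ℕ => ((j+m:ℕ):ℝ) * poissonPMFReal m (j + m)) :=
    (summable_nat_add_iff m).mpr (summable_mean m)
  have h2 : Summable (fun j : ℕ => (m:ℝ) * poissonPMFReal m (j + m)) :=
    (summable_tail m m).mul_left _
  have := h1.sub h2
  apply Summable.congr this
  intro j
  push_cast
  rw [add_comm m j]
  ring

lemma summable_jdd (m : ℕ) : Summable (fun j : ℕ => (j:ℝ) * dd m j) := by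
  unfold dd
  have ha : Summable (fun j : ℕ => (j:ℝ) * if j ≤ m then poissonPMFReal m (m - j) else 0) := by
    apply summable_of_ne_finset_zero (s := Finset.range (m+1))
    intro j hj
    simp at hj
    rw [if_neg (by omega), mul_zero]
  have := ha.sub (summable_jtail m)
  apply Summable.congr this
  intro j
  ring

lemma tsum_a (m : ℕ) :
    ∑' j : ℕ, (if j ≤ m then poissonPMFReal m (m - j) else 0) = Fp m m := by
  rw [tsum_eq_sum (s := Finset.range (m+1))
    (by intro j hj; simp at hj; rw [if_neg (by omega)])]
  have hrefl := Finset.sum_range_reflect (fun j => poissonPMFReal m j) (m+1)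
  simp only [Nat.add_sub_cancel] at hrefl
  unfold Fp
  rw [← hrefl]
  apply Finset.sum_congr rfl
  intro j hj
  simp only [Finset.mem_range] at hj
  rw [if_pos (by omega)]

lemma tsum_dd (m : ℕ) (hm : 1 ≤ m) :
    ∑' j : ℕ, dd m j = Fp m m + Fp m (m-1) - 1 := by
  unfold dd
  rw [Summable.tsum_sub (summable_a m) (summable_tail' m m)]
  rw [tsum_a]
  have ht : ∑' j : ℕ, poissonPMFReal m (m + j) = 1 - Fp m (m-1) := by
    have := tail_eq m m
    simp_rw [add_comm m] at this ⊢
    rw [this]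
    unfold Fp
    have hmm : m - 1 + 1 = m := by omega
    rw [hmm]
  rw [ht]
  ring

lemma tsum_jdd (m : ℕ) (hm : 1 ≤ m) : ∑' j : ℕ, (j:ℝ) * dd m j = 0 := by
  have hsa : Summable (fun j : ℕ => (j:ℝ) * if j ≤ m then poissonPMFReal m (m - j) else 0) := by
    apply summable_of_ne_finset_zero (s := Finset.range (m+1))
    intro j hj
    simp at hj
    rw [if_neg (by omega), mul_zero]
  have e0 : ∀ j : ℕ, (j:ℝ) * dd m j
      = ((j:ℝ) * if j ≤ m then poissonPMFReal m (m - j) else 0)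
        - (j:ℝ) * poissonPMFReal m (m + j) := by
    intro j; unfold dd; ring
  rw [tsum_congr e0, Summable.tsum_sub hsa (summable_jtail m)]
  -- finite part
  have hfin : ∑' j : ℕ, ((j:ℝ) * if j ≤ m then poissonPMFReal m (m - j) else 0)
      = ∑ i ∈ Finset.range (m+1), ((m:ℝ) - i) * poissonPMFReal m i := by
    rw [tsum_eq_sum (s := Finset.range (m+1))
      (by intro j hj; simp at hj; rw [if_neg (by omega), mul_zero])]
    have hrefl := Finset.sum_range_reflect
      (fun j => ((j:ℝ)) * if j ≤ m then poissonPMFReal m (m - j) else 0) (m+1)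
    simp only [Nat.add_sub_cancel] at hrefl
    rw [← hrefl]
    apply Finset.sum_congr rfl
    intro j hj
    simp only [Finset.mem_range] at hj
    rw [if_pos (by omega : m - j ≤ m)]
    have h1 : m - (m - j) = j := by omega
    have h2 : ((m - j : ℕ) : ℝ) = (m:ℝ) - j := by
      have : j ≤ m := by omega
      push_cast [this]; ring
    rw [h1, h2]
  rw [hfin]
  -- tail part
  have htail : ∑' j : ℕ, (j:ℝ) * poissonPMFReal m (m + j)
      = ∑ i ∈ Finset.range (m+1), ((m:ℝ) - i) * poissonPMFReal m i := by
    have e1 : ∀ j : ℕ, (j:ℝ) * poissonPMFReal m (m + j)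
        = ((j+m:ℕ):ℝ) * poissonPMFReal m (j + m) - (m:ℝ) * poissonPMFReal m (j + m) := by
      intro j
      push_cast
      rw [add_comm m j]
      ring
    rw [tsum_congr e1, Summable.tsum_sub ((summable_nat_add_iff m).mpr (summable_mean m))
      ((summable_tail m m).mul_left _)]
    have h1 : ∑' j : ℕ, ((j+m:ℕ):ℝ) * poissonPMFReal m (j + m)
        = (m:ℝ) - ∑ i ∈ Finset.range m, (i:ℝ) * poissonPMFReal m i := by
      have := Summable.sum_add_tsum_nat_add (f := fun k : ℕ => (k:ℝ) * poissonPMFReal m k) m (summable_mean m)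
      rw [(hasSum_mean m).tsum_eq] at this
      linarith
    have h2 : ∑' j : ℕ, (m:ℝ) * poissonPMFReal m (j + m)
        = (m:ℝ) * (1 - ∑ i ∈ Finset.range m, poissonPMFReal m i) := by
      rw [tsum_mul_left, tail_eq]
    rw [h1, h2]
    have hsplit : ∑ i ∈ Finset.range (m+1), ((m:ℝ) - i) * poissonPMFReal m i
        = ∑ i ∈ Finset.range m, ((m:ℝ) - i) * poissonPMFReal m i := by
      rw [Finset.sum_range_succ]
      simp
    have hrhs : ∑ i ∈ Finset.range m, ((m:ℝ) - i) * poissonPMFReal m i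
        = (m:ℝ) * (∑ i ∈ Finset.range m, poissonPMFReal m i)
          - ∑ i ∈ Finset.range m, (i:ℝ) * poissonPMFReal m i := by
      rw [Finset.mul_sum, ← Finset.sum_sub_distrib]
      apply Finset.sum_congr rfl
      intro i _
      ring
    rw [hsplit, hrhs]
    ring
  rw [htail]
  ring




lemma tsum_dd_nonneg (m : ℕ) (hm : 3 ≤ m) : 0 ≤ ∑' j : ℕ, dd m j := by
  have hm0 : 0 < m := by omega
  have hT : dd m (m+1) < 0 := by
    rw [dd, if_neg (by omega)]
    simp only [zero_sub, neg_neg, neg_lt, neg_zero]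
    exact pPos m hm0 _
  have hne : {j : ℕ | dd m j < 0}.Nonempty := ⟨m+1, hT⟩
  set j0 := sInf {j : ℕ | dd m j < 0} with hj0def
  have hj0 : dd m j0 < 0 := Nat.sInf_mem hne
  have hnotlt : ∀ j, j < j0 → ¬ dd m j < 0 := fun j hj => Nat.notMem_of_lt_sInf hj
  have h2 : 2 ≤ j0 := by
    by_contra hlt
    push_neg at hlt
    interval_cases j0
    · rw [dd_zero] at hj0; linarith
    · exact absurd hj0 (not_lt.mpr (dd_one m hm))
  set c := j0 - 1 with hc
  have hc1 : 1 ≤ c := by omega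
  have hpos : ∀ j, j ≤ c → 0 ≤ dd m j := by
    intro j hj
    exact le_of_not_gt (hnotlt j (by omega))
  have hneg : ∀ j, c < j → dd m j ≤ 0 := by
    intro j hj
    exact (dd_propagate m hm j0 (by omega) hj0 j (by omega)).le
  have key : ∀ j : ℕ, (j:ℝ) * dd m j ≤ (c:ℝ) * dd m j := by
    intro j
    rcases le_or_gt j c with h | h
    · exact mul_le_mul_of_nonneg_right (by exact_mod_cast h) (hpos j h)
    · exact mul_le_mul_of_nonpos_right (by exact_mod_cast h.le) (hneg j h)
  have hsum := Summable.tsum_le_tsum key (summable_jdd m) ((summable_dd m).mul_left (c:ℝ))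
  rw [tsum_jdd m (by omega), tsum_mul_left] at hsum
  by_contra hS
  push_neg at hS
  have : (c:ℝ) * ∑' j, dd m j < 0 := by
    apply mul_neg_of_pos_of_neg _ hS
    exact_mod_cast hc1
  linarith

lemma p0_le (m : ℕ) (hm : 3 ≤ m) : poissonPMFReal m 0 ≤ poissonPMFReal m (m+m) := by
  by_contra h
  push_neg at h
  rw [pmf_lt_pmf m (by omega)] at h
  simp only [Nat.factorial_zero, one_mul, pow_zero, mul_one] at h
  have := nat2m m hm
  have h2 : m + m = 2 * m := by ring
  rw [h2] at h
  omega

noncomputable def al (m : ℕ) (i : ℕ) : ℝ := Fp m (m - i) + Fp m (m + i - 1) - 1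

lemma Fp_succ (r : ℝ≥0) (K : ℕ) : Fp r (K+1) = Fp r K + poissonPMFReal r (K+1) := by
  unfold Fp; rw [Finset.sum_range_succ]

lemma al_step (m i : ℕ) (hi : 1 ≤ i) (him : i < m) :
    al m i - al m (i+1) = dd m i := by
  have e1 : m - i = (m - (i+1)) + 1 := by omega
  have e2 : m + (i+1) - 1 = (m + i - 1) + 1 := by omega
  have e3 : m + i - 1 + 1 = m + i := by omega
  have h1 : Fp m (m - i) = Fp m (m - (i+1)) + poissonPMFReal m (m - i) := by
    rw [e1, Fp_succ, ← e1]
  have h2 : Fp m (m + (i+1) - 1) = Fp m (m + i - 1) + poissonPMFReal m (m + i) := by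
    rw [e2, Fp_succ, e3]
  rw [al, al, h1, h2, dd, if_pos (by omega : i ≤ m)]
  ring

lemma mono1 (m : ℕ) (i : ℕ) (hi : 1 ≤ i) :
    ∀ j, i ≤ j → j ≤ m → (∀ k, i ≤ k → k < j → 0 ≤ dd m k) → al m j ≤ al m i := by
  intro j hij
  induction j, hij using Nat.le_induction with
  | base => intro _ _; exact le_refl _
  | succ n hn ih =>
    intro hnm hk
    have h1 : al m (n+1) ≤ al m n := by
      have := al_step m n (by omega) (by omega)
      have h0 := hk n hn (by omega)
      linarith
    have h2 := ih (by omega) (fun k h1' h2' => hk k h1' (by omega))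
    linarith

lemma mono2 (m : ℕ) (hm : 3 ≤ m) (i : ℕ) (hi : 1 ≤ i) (hd : dd m i < 0) :
    ∀ j, i ≤ j → j ≤ m → al m i ≤ al m j := by
  intro j hij
  induction j, hij using Nat.le_induction with
  | base => intro _; exact le_refl _
  | succ n hn ih =>
    intro hnm
    have h2 := ih (by omega)
    have hdn : dd m n < 0 := dd_propagate m hm i hi hd n hn
    have := al_step m n (by omega) (by omega)
    linarith

lemma al_one (m : ℕ) (hm : 3 ≤ m) : 0 ≤ al m 1 := by
  have h := tsum_dd_nonneg m hm
  rw [tsum_dd m (by omega)] at h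
  have e : m + 1 - 1 = m := by omega
  rw [al, e]
  linarith

lemma al_m (m : ℕ) (hm : 3 ≤ m) : al m m ≤ 0 := by
  have e1 : m - m = 0 := by omega
  rw [al, e1]
  have hFp0 : Fp m 0 = poissonPMFReal m 0 := by
    unfold Fp; rw [Finset.sum_range_one]
  have htail : ∑' j : ℕ, poissonPMFReal m (j + (m+m)) = 1 - Fp m (m + m - 1) := by
    rw [tail_eq]
    unfold Fp
    have e : m + m - 1 + 1 = m + m := by omega
    rw [e]
  have hle : poissonPMFReal m (m+m) ≤ ∑' j : ℕ, poissonPMFReal m (j + (m+m)) := by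
    have h0 := Summable.le_tsum (summable_tail m (m+m)) 0
      (fun j _ => poissonPMFReal_nonneg)
    simpa using h0
  have := p0_le m hm
  rw [hFp0]
  rw [htail] at hle
  linarith
theorem stmt12 (m : ℕ) (hm : 3 ≤ m) :
    ∃ ℓ ∈ Finset.Icc 1 m,
      (∀ i ∈ Finset.Icc 1 m, i ≤ ℓ →
        0 ≤ (poissonMeasure (m : ℝ≥0) {n : ℕ | n ≤ m - i}).toReal
          - (poissonMeasure (m : ℝ≥0) {n : ℕ | m + i ≤ n}).toReal) ∧
      (∀ i ∈ Finset.Icc 1 m, ℓ < i →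
        (poissonMeasure (m : ℝ≥0) {n : ℕ | n ≤ m - i}).toReal
          - (poissonMeasure (m : ℝ≥0) {n : ℕ | m + i ≤ n}).toReal ≤ 0) := by
  have key : ∀ i ∈ Finset.Icc 1 m,
      (poissonMeasure (m : ℝ≥0) {n : ℕ | n ≤ m - i}).toReal
        - (poissonMeasure (m : ℝ≥0) {n : ℕ | m + i ≤ n}).toReal = al m i := by
    intro i hi
    simp only [Finset.mem_Icc] at hi
    have e : m + i = (m + i - 1) + 1 := by omega
    rw [M1, e, M2]
    unfold al
    ring
  by_cases hall : ∀ i ∈ Finset.Icc 1 m, 0 ≤ al m i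
  · refine ⟨m, by simp [Finset.mem_Icc]; omega, ?_, ?_⟩
    · intro i hi _
      rw [key i hi]
      exact hall i hi
    · intro i hi hlt
      exfalso
      simp only [Finset.mem_Icc] at hi
      omega
  · push_neg at hall
    obtain ⟨i0, hi0, hneg0⟩ := hall
    have hSne : {i : ℕ | i ∈ Finset.Icc 1 m ∧ al m i < 0}.Nonempty := ⟨i0, hi0, hneg0⟩
    have hmem := Nat.sInf_mem hSne
    set j0 := sInf {i : ℕ | i ∈ Finset.Icc 1 m ∧ al m i < 0} with hj0def
    obtain ⟨hj0Icc, hj0neg⟩ := hmem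
    have hj0b : 1 ≤ j0 ∧ j0 ≤ m := Finset.mem_Icc.mp hj0Icc
    obtain ⟨hj0b1, hj0b2⟩ := hj0b
    have hj0ne1 : j0 ≠ 1 := by
      intro h
      rw [h] at hj0neg
      linarith [al_one m hm]
    refine ⟨j0 - 1, by simp [Finset.mem_Icc]; omega, ?_, ?_⟩
    · intro i hi hile
      rw [key i hi]
      by_contra h
      push_neg at h
      have hmem : i ∈ {i : ℕ | i ∈ Finset.Icc 1 m ∧ al m i < 0} := ⟨hi, h⟩
      have := Nat.sInf_le hmem
      omega
    · intro i hi hgt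
      rw [key i hi]
      have hi' := hi
      simp only [Finset.mem_Icc] at hi'
      have hj0i : j0 ≤ i := by omega
      by_cases hP : ∀ k, j0 ≤ k → k < i → 0 ≤ dd m k
      · have := mono1 m j0 (by omega) i hj0i hi'.2 hP
        linarith
      · push_neg at hP
        obtain ⟨k, hk1, hk2, hk3⟩ := hP
        have hdi : dd m i < 0 := dd_propagate m hm k (by omega) hk3 i (by omega)
        have := mono2 m hm i (by omega) hdi m hi'.2 (le_refl m)
        linarith [al_m m hm]
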